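/- Let r ≥ 1 and k ≥ 2 be integers and let ℓ_1, ..., ℓ_k be nonnegative integers with ℓ_1 + ⋯ + ℓ_k + k - 1 = r. Let 𝒜_r'' be the set of all permutations (coordinate rearrangements) of the r-tuple r·( (1/(ℓ_1+1))(1, ..., ℓ_1); (1/(ℓ_2+1))(1, ..., ℓ_2); ...; (1/(ℓ_k+1))(1, ..., ℓ_k); 1/2, ..., 1/2; 1 ), where the entry 1/2 is repeated k-2 times and a block (1/(ℓ_n+1))(1,...,ℓ_n) is empty if ℓ_n = 0. Then 𝒜_r'' ⊆ 𝒜_r, where 𝒜_r is the convex hull in ℝ^r of the set of all permutations of the r-tuple (1, 2, ..., r). -/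

import Mathlib

/-- `𝒜_r`: the convex hull in ℝ^r of the set of all permutations of the vector (1, 2, ..., r). -/
def permsHull (r : ℕ) : Set (Fin r → ℝ) :=
  convexHull ℝ {v : Fin r → ℝ | ∃ σ : Equiv.Perm (Fin r), v = fun i => ((σ i : ℕ) : ℝ) + 1}

private lemma monad_cast_eq (M : Multiset ℕ) :
    (M >>= fun a => (pure ((a:ℝ)) : Multiset ℝ)) = M.map (fun a : ℕ => (a:ℝ)) := by
  change M.bind (fun a => {(a:ℝ)}) = _
  exact Multiset.bind_singleton _ _

private lemma sum_range_cast (m : ℕ) :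
    (∑ j ∈ Finset.range m, ((j:ℝ)+1)) = m*(m+1)/2 := by
  induction m with
  | zero => simp
  | succ n ih => rw [Finset.sum_range_succ, ih]; push_cast; ring

private lemma sum_fin_cast (m : ℕ) : (∑ j : Fin m, (((j:ℕ):ℝ)+1)) = m*(m+1)/2 :=
  (Fin.sum_univ_eq_sum_range (fun n => ((n:ℝ)+1)) m).trans (sum_range_cast m)

private lemma merge_ineq {a b x y : ℝ} (hx : 0 ≤ x) (hy : 0 ≤ y) (hxa : x ≤ a) (hyb : y ≤ b) :
    (x+y)*(x+y+1)/(a+b+1) ≤ x*(x+1)/(a+1) + y*(y+1)/(b+1) := by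
  have ha : 0 ≤ a := hx.trans hxa
  have hb : 0 ≤ b := hy.trans hyb
  rw [div_add_div _ _ (by positivity) (by positivity),
    div_le_div_iff₀ (by positivity) (by positivity)]
  have key : 2*x*y*((a+1)*(b+1)) ≤ b*(b+1)*(x*(x+1)) + a*(a+1)*(y*(y+1)) := by
    set p := b*(b+1)*(x*(x+1)) with hp
    set q := a*(a+1)*(y*(y+1)) with hq
    set s := (a+1)*(b+1)*(x*y) with hs
    have hp0 : 0 ≤ p := by positivity
    have hq0 : 0 ≤ q := by positivity
    have hs0 : 0 ≤ s := by positivity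
    have h1 : (a+1)*x ≤ a*(x+1) := by nlinarith
    have h2 : (b+1)*y ≤ b*(y+1) := by nlinarith
    have hpq : s^2 ≤ p*q := by
      have h3 : ((a+1)*x)*((b+1)*y) ≤ (a*(x+1))*(b*(y+1)) :=
        mul_le_mul h1 h2 (by positivity) (by positivity)
      nlinarith [mul_nonneg (mul_nonneg ha hb) (mul_nonneg hx hy), hs0,
        mul_le_mul_of_nonneg_left h3 hs0]
    nlinarith [sq_nonneg (p - q), hpq, hp0, hq0, hs0]
  nlinarith [key]

/-- The multiset of values of one block. -/
noncomputable def blockM (r m : ℕ) : Multiset ℝ :=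
  (Multiset.range m).map fun j : ℕ => (r:ℝ) * ((j:ℝ)+1) / ((m:ℝ)+1)

private lemma blockM_sum (r m : ℕ) : (blockM r m).sum = (r:ℝ)*m/2 := by
  have h0 : (blockM r m).sum = ∑ j ∈ Finset.range m, ((r:ℝ)*((j:ℝ)+1)/((m:ℝ)+1)) := rfl
  have hm : ((m:ℝ)+1) ≠ 0 := by positivity
  rw [h0, ← Finset.sum_div, ← Finset.mul_sum, sum_range_cast]
  field_simp

private lemma block_aux (r m : ℕ) : ∀ (n : ℕ) (S : Multiset ℝ),
    S ≤ (Multiset.range n).map (fun j : ℕ => (r:ℝ) * ((j:ℝ)+1) / ((m:ℝ)+1)) →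
    Multiset.card S ≤ n ∧
      (r:ℝ)/2 * (((Multiset.card S : ℝ) * ((Multiset.card S : ℝ)+1)) / ((m:ℝ)+1)) ≤ S.sum := by
  intro n
  induction n with
  | zero =>
    intro S hS
    rw [Multiset.range_zero, Multiset.map_zero, Multiset.le_zero] at hS
    subst hS
    simp
  | succ n ih =>
    intro S hS
    set g : ℕ → ℝ := fun j => (r:ℝ) * ((j:ℝ)+1) / ((m:ℝ)+1) with hg
    rw [Multiset.range_succ, Multiset.map_cons] at hS
    by_cases hmem : g n ∈ S
    · have hSeq : g n ::ₘ S.erase (g n) = S := Multiset.cons_erase hmem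
      have h2 : S.erase (g n) ≤ (Multiset.range n).map g := by
        have := Multiset.erase_le_erase (g n) hS
        rwa [Multiset.erase_cons_head] at this
      obtain ⟨hc, hs⟩ := ih _ h2
      have hm1 : (0:ℝ) < (m:ℝ)+1 := by positivity
      constructor
      · rw [← hSeq, Multiset.card_cons]; omega
      · rw [← hSeq, Multiset.card_cons, Multiset.sum_cons]
        have hcR : ((Multiset.card (S.erase (g n)) : ℝ)) ≤ (n:ℝ) := by exact_mod_cast hc
        set c : ℝ := (Multiset.card (S.erase (g n)) : ℝ) with hcdef
        push_cast
        have hgn : (r:ℝ) * (c+1) / ((m:ℝ)+1) ≤ g n := by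
          have h1 : c + 1 ≤ (n:ℝ) + 1 := by linarith
          show _ ≤ (r:ℝ) * ((n:ℝ)+1) / ((m:ℝ)+1)
          gcongr
        have hid : (r:ℝ)/2 * ((c+1) * ((c+1)+1) / ((m:ℝ)+1))
            = (r:ℝ)/2 * (c * (c+1) / ((m:ℝ)+1)) + (r:ℝ) * (c+1) / ((m:ℝ)+1) := by
          field_simp
          ring
        rw [hid]
        linarith [hs, hgn]
    · rw [Multiset.le_cons_of_notMem hmem] at hS
      obtain ⟨hc, hs⟩ := ih _ hS
      exact ⟨hc.trans (Nat.le_succ n), hs⟩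

private lemma family_bound (r : ℕ) {ι : Type*} [DecidableEq ι] (ℓ : ι → ℕ) (s : Finset ι) :
    ∀ S : Multiset ℝ, S ≤ ∑ i ∈ s, blockM r (ℓ i) →
    Multiset.card S ≤ ∑ i ∈ s, ℓ i ∧
      (r:ℝ)/2 * (((Multiset.card S : ℝ) * ((Multiset.card S : ℝ)+1))
        / (((∑ i ∈ s, ℓ i : ℕ):ℝ)+1)) ≤ S.sum := by
  induction s using Finset.cons_induction with
  | empty =>
    intro S hS
    rw [Finset.sum_empty, Multiset.le_zero] at hS
    subst hS
    simp
  | cons a t ha ih =>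
    intro S hS
    rw [Finset.sum_cons] at hS
    set B := blockM r (ℓ a) with hB
    have h1 : S ∩ B ≤ B := Multiset.inter_le_right
    have h2 : S - B ≤ ∑ i ∈ t, blockM r (ℓ i) := by
      rw [Multiset.sub_le_iff_le_add]
      rwa [add_comm] at hS
    obtain ⟨hc1, hs1⟩ := block_aux r (ℓ a) (ℓ a) _ h1
    obtain ⟨hc2, hs2⟩ := ih _ h2
    have hSsplit : S - B + S ∩ B = S := Multiset.sub_add_inter S B
    have hcard : Multiset.card (S - B) + Multiset.card (S ∩ B) = Multiset.card S := by
      rw [← Multiset.card_add, hSsplit]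
    have hsumS : (S - B).sum + (S ∩ B).sum = S.sum := by
      rw [← Multiset.sum_add, hSsplit]
    set x : ℝ := (Multiset.card (S ∩ B) : ℝ) with hx
    set y : ℝ := (Multiset.card (S - B) : ℝ) with hy
    have hx0 : 0 ≤ x := by positivity
    have hy0 : 0 ≤ y := by positivity
    have hxa : x ≤ (ℓ a : ℝ) := by rw [hx]; exact_mod_cast hc1
    have hyb : y ≤ ((∑ i ∈ t, ℓ i : ℕ) : ℝ) := by rw [hy]; exact_mod_cast hc2
    constructor
    · rw [Finset.sum_cons, ← hcard]; omega
    · have hcS : (Multiset.card S : ℝ) = x + y := by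
        rw [hx, hy, add_comm]; exact_mod_cast hcard.symm
      have hden : (((∑ i ∈ Finset.cons a t ha, ℓ i : ℕ)):ℝ)
          = (ℓ a : ℝ) + ((∑ i ∈ t, ℓ i : ℕ):ℝ) := by
        rw [Finset.sum_cons]; push_cast; ring
      have hm := merge_ineq hx0 hy0 hxa hyb
      have hr2 : (0:ℝ) ≤ (r:ℝ)/2 := by positivity
      calc (r:ℝ)/2 * (((Multiset.card S : ℝ) * ((Multiset.card S : ℝ)+1))
            / (((∑ i ∈ Finset.cons a t ha, ℓ i : ℕ):ℝ)+1))
          = (r:ℝ)/2 * ((x+y)*((x+y)+1) / ((ℓ a:ℝ) + ((∑ i ∈ t, ℓ i : ℕ):ℝ) + 1)) := by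
            rw [hcS, hden]
        _ ≤ (r:ℝ)/2 * ((x*(x+1)/((ℓ a:ℝ)+1)) + (y*(y+1)/(((∑ i ∈ t, ℓ i : ℕ):ℝ)+1))) := by
            exact mul_le_mul_of_nonneg_left hm hr2
        _ = (r:ℝ)/2 * (x*(x+1)/((ℓ a:ℝ)+1))
            + (r:ℝ)/2 * (y*(y+1)/(((∑ i ∈ t, ℓ i : ℕ):ℝ)+1)) := by ring
        _ ≤ (S ∩ B).sum + (S - B).sum := add_le_add hs1 hs2
        _ = S.sum := by rw [← hsumS]; exact add_comm _ _
private lemma rado (r : ℕ) (v : Fin r → ℝ)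
    (htot : ∑ i, v i = (r:ℝ)*((r:ℝ)+1)/2)
    (hsub : ∀ T : Finset (Fin r), ((T.card : ℝ) * ((T.card:ℝ)+1))/2 ≤ ∑ i ∈ T, v i) :
    v ∈ permsHull r := by
  by_contra hv
  set G : Set (Fin r → ℝ) :=
    {u | ∃ σ : Equiv.Perm (Fin r), u = fun i => ((σ i : ℕ) : ℝ) + 1} with hG
  have hGfin : G.Finite := by
    have : G = Set.range (fun σ : Equiv.Perm (Fin r) => fun i => ((σ i : ℕ):ℝ)+1) := by
      ext u
      constructor
      · rintro ⟨σ, rfl⟩; exact ⟨σ, rfl⟩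
      · rintro ⟨σ, rfl⟩; exact ⟨σ, rfl⟩
    rw [this]; exact Set.finite_range _
  have hclosed : IsClosed (permsHull r) := (hGfin.isCompact_convexHull ℝ).isClosed
  obtain ⟨f, b, hfb, hfv⟩ :=
    geometric_hahn_banach_closed_point (s := permsHull r) (convex_convexHull ℝ G) hclosed hv
  set c : Fin r → ℝ := fun i => f (fun j => if i = j then (1:ℝ) else 0) with hc
  have hfx : ∀ x : Fin r → ℝ, f x = ∑ i, x i * c i := by
    intro x
    conv_lhs => rw [pi_eq_sum_univ x, map_sum]
    congr 1
    ext i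
    rw [map_smul, smul_eq_mul, hc]
  set π := Tuple.sort c with hπ
  have hmono : Monotone (c ∘ π) := Tuple.monotone_sort c
  set w : Fin r → ℝ := fun i => ((π.symm i : ℕ) : ℝ) + 1 with hw
  have hwK : w ∈ permsHull r := subset_convexHull ℝ G ⟨π.symm, rfl⟩
  have h1 : f w < f v := lt_trans (hfb w hwK) hfv
  -- set up ℕ-indexed sequences
  set d : ℕ → ℝ := fun n => if h : n < r then c (π ⟨n, h⟩) else 0 with hd
  set g : ℕ → ℝ := fun n => if h : n < r then v (π ⟨n, h⟩) - ((n:ℝ)+1) else 0 with hgdef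
  -- partial sums of g are nonnegative
  have hpartial : ∀ t, t ≤ r → 0 ≤ ∑ n ∈ Finset.range t, g n := by
    intro t ht
    have hinj : Function.Injective (fun j : Fin t => π (Fin.castLE ht j)) := by
      intro a b hab
      have := π.injective hab
      exact Fin.castLE_injective ht this
    set T : Finset (Fin r) := Finset.image (fun j : Fin t => π (Fin.castLE ht j)) Finset.univ
      with hT
    have hcardT : T.card = t := by
      rw [hT, Finset.card_image_of_injective _ hinj, Finset.card_univ, Fintype.card_fin]
    have hsumT : ∑ i ∈ T, v i = ∑ j : Fin t, v (π (Fin.castLE ht j)) := by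
      rw [hT, Finset.sum_image (fun a _ ba _ hab => hinj hab)]
    have hr : ∑ n ∈ Finset.range t, g n
        = ∑ j : Fin t, (v (π (Fin.castLE ht j)) - (((j:ℕ):ℝ)+1)) := by
      rw [← Fin.sum_univ_eq_sum_range (fun n => g n) t]
      apply Finset.sum_congr rfl
      intro j _
      have hj : (j : ℕ) < r := lt_of_lt_of_le j.isLt ht
      simp only [hgdef, dif_pos hj]
      rfl
    rw [hr, Finset.sum_sub_distrib, sum_fin_cast]
    have := hsub T
    rw [hcardT] at this
    rw [hsumT] at this
    linarith
  have htotal : ∑ n ∈ Finset.range r, g n = 0 := by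
    have hr : ∑ n ∈ Finset.range r, g n = ∑ j : Fin r, (v (π j) - (((j:ℕ):ℝ)+1)) := by
      rw [← Fin.sum_univ_eq_sum_range (fun n => g n) r]
      apply Finset.sum_congr rfl
      intro j _
      simp only [hgdef, dif_pos j.isLt]
    rw [hr, Finset.sum_sub_distrib, sum_fin_cast]
    have : ∑ j : Fin r, v (π j) = ∑ i, v i := Equiv.sum_comp π v
    rw [this, htot]
    ring
  -- Abel summation
  have habel : ∑ n ∈ Finset.range r, d n * g n ≤ 0 := by
    have hparts := Finset.sum_range_by_parts d g r
    simp only [smul_eq_mul] at hparts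
    rw [hparts, htotal, mul_zero, zero_sub, neg_nonpos]
    apply Finset.sum_nonneg
    intro i hi
    rw [Finset.mem_range] at hi
    have hi1 : i + 1 < r := by omega
    have hi0 : i < r := by omega
    apply mul_nonneg
    · have : c (π ⟨i, hi0⟩) ≤ c (π ⟨i+1, hi1⟩) := hmono (show (⟨i,hi0⟩ : Fin r) ≤ ⟨i+1,hi1⟩ by simp [Fin.mk_le_mk])
      simp only [hd, dif_pos hi1, dif_pos hi0]
      linarith
    · exact hpartial (i+1) (by omega)
  -- translate back
  have hswap : ∑ n ∈ Finset.range r, d n * g n = f v - f w := by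
    have h2 : ∑ n ∈ Finset.range r, d n * g n
        = ∑ j : Fin r, c (π j) * (v (π j) - (((j:ℕ):ℝ)+1)) := by
      rw [← Fin.sum_univ_eq_sum_range (fun n => d n * g n) r]
      apply Finset.sum_congr rfl
      intro j _
      simp only [hd, hgdef, dif_pos j.isLt]
    rw [h2, hfx v, hfx w]
    rw [show (∑ i, v i * c i) = ∑ j : Fin r, v (π j) * c (π j) from
      (Equiv.sum_comp π (fun i => v i * c i)).symm]
    rw [show (∑ i, w i * c i) = ∑ j : Fin r, w (π j) * c (π j) from
      (Equiv.sum_comp π (fun i => w i * c i)).symm]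
    have hwj : ∀ j : Fin r, w (π j) = ((j:ℕ):ℝ) + 1 := by
      intro j
      rw [hw]
      simp
    rw [← Finset.sum_sub_distrib]
    apply Finset.sum_congr rfl
    intro j _
    rw [hwj j]
    ring
  rw [hswap] at habel
  linarith

private lemma msum_sum {ι : Type*} (s : Finset ι) (f : ι → Multiset ℝ) :
    (∑ i ∈ s, f i).sum = ∑ i ∈ s, (f i).sum := by
  induction s using Finset.cons_induction with
  | empty => simp
  | cons a t ha ih => rw [Finset.sum_cons, Multiset.sum_add, ih, Finset.sum_cons]

theorem stmt_5 (r k : ℕ) (hr : 1 ≤ r) (hk : 2 ≤ k) (l : Fin k → ℕ)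
    (hsum : (∑ n, l n) + (k - 1) = r) :
    ∀ v : Fin r → ℝ,
      Finset.univ.val.map v =
        (Finset.univ.val.bind fun n : Fin k =>
          (Multiset.range (l n)).map fun j =>
            (r : ℝ) * ((j : ℝ) + 1) / ((l n : ℝ) + 1))
        + Multiset.replicate (k - 2) ((r : ℝ) / 2) + {(r : ℝ)} →
      v ∈ permsHull r := by
  intro v hv
  simp only [monad_cast_eq, Multiset.map_map] at hv
  classical
  set L : Fin k ⊕ Fin (k-2) → ℕ := Sum.elim l (fun _ => 1) with hL
  have hLsum : ∑ i : Fin k ⊕ Fin (k-2), L i = r - 1 := by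
    rw [Fintype.sum_sum_type]
    simp only [hL, Sum.elim_inl, Sum.elim_inr]
    rw [Finset.sum_const, Finset.card_univ, Fintype.card_fin, smul_eq_mul, mul_one]
    omega
  have hv' : Finset.univ.val.map v
      = (∑ i : Fin k ⊕ Fin (k-2), blockM r (L i)) + {(r:ℝ)} := by
    rw [hv, Fintype.sum_sum_type]
    have h1 : blockM r (1:ℕ) = {(r:ℝ)/2} := by
      rw [blockM, show Multiset.range 1 = {0} from rfl, Multiset.map_singleton]
      norm_num
    have hrep : Multiset.replicate (k-2) ((r:ℝ)/2)
        = ∑ b : Fin (k-2), blockM r (L (Sum.inr b)) := by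
      calc Multiset.replicate (k-2) ((r:ℝ)/2)
          = (k-2) • ({(r:ℝ)/2} : Multiset ℝ) := (Multiset.nsmul_singleton _ _).symm
        _ = ∑ _b : Fin (k-2), ({(r:ℝ)/2} : Multiset ℝ) := by
            rw [Finset.sum_const, Finset.card_univ, Fintype.card_fin]
        _ = ∑ b : Fin (k-2), blockM r (L (Sum.inr b)) := by
            apply Finset.sum_congr rfl
            intro b _
            rw [show L (Sum.inr b) = 1 from rfl, h1]
    rw [hrep]
    rfl
  have hrpos : (0:ℝ) < (r:ℝ) := by exact_mod_cast hr
  have hcastr : (((r-1:ℕ)):ℝ) = (r:ℝ) - 1 := by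
    rw [Nat.cast_sub hr, Nat.cast_one]
  have htot : ∑ i, v i = (r:ℝ)*((r:ℝ)+1)/2 := by
    have h0 : ∑ i, v i = (Finset.univ.val.map v).sum := rfl
    rw [h0, hv', Multiset.sum_add, msum_sum, Multiset.sum_singleton,
      Finset.sum_congr rfl (fun i _ => blockM_sum r (L i)),
      ← Finset.sum_div, ← Finset.mul_sum, ← Nat.cast_sum, hLsum, hcastr]
    ring
  have hsub : ∀ T : Finset (Fin r),
      ((T.card : ℝ) * ((T.card:ℝ)+1))/2 ≤ ∑ i ∈ T, v i := by
    intro T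
    have hS0 : ∑ i ∈ T, v i = (T.val.map v).sum := rfl
    have hSle : T.val.map v ≤ Finset.univ.val.map v :=
      Multiset.map_le_map (Finset.val_le_iff.mpr (Finset.subset_univ T))
    rw [hv'] at hSle
    set S := T.val.map v with hSdef
    have hcardS : Multiset.card S = T.card := Multiset.card_map _ _
    have h3 : S ∩ {(r:ℝ)} ≤ {(r:ℝ)} := Multiset.inter_le_right
    have h2 : S - {(r:ℝ)} ≤ ∑ i : Fin k ⊕ Fin (k-2), blockM r (L i) :=
      Multiset.sub_le_iff_le_add.mpr hSle
    obtain ⟨hc, hb⟩ := family_bound r L Finset.univ _ h2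
    rw [hLsum] at hc hb
    rw [show (((r-1:ℕ)):ℝ) + 1 = (r:ℝ) by rw [hcastr]; ring] at hb
    set c : ℝ := (Multiset.card (S - {(r:ℝ)}) : ℝ) with hcdef
    have hb' : c * (c+1) / 2 ≤ (S - {(r:ℝ)}).sum := by
      have hre : (r:ℝ)/2 * (c*(c+1)/(r:ℝ)) = c*(c+1)/2 := by
        field_simp
      linarith [hb, hre.symm.le]
    have hcr : c ≤ (r:ℝ) - 1 := by
      rw [hcdef, ← hcastr]
      exact_mod_cast hc
    have hsplit : S - {(r:ℝ)} + S ∩ {(r:ℝ)} = S := Multiset.sub_add_inter _ _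
    rcases Multiset.le_singleton.mp h3 with h0 | h0
    · rw [h0, add_zero] at hsplit
      rw [hS0]
      have : Multiset.card S = Multiset.card (S - {(r:ℝ)}) := by rw [hsplit]
      rw [← hcardS, this]
      rw [hsplit] at hb'
      exact hb'
    · have hcs : Multiset.card S = Multiset.card (S - {(r:ℝ)}) + 1 := by
        conv_lhs => rw [← hsplit, h0]
        rw [Multiset.card_add, Multiset.card_singleton]
      have hss : S.sum = (S - {(r:ℝ)}).sum + (r:ℝ) := by
        conv_lhs => rw [← hsplit, h0]
        rw [Multiset.sum_add, Multiset.sum_singleton]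
      rw [hS0, ← hcardS, hcs, hss]
      push_cast
      nlinarith [hb', hcr]
  exact rado r v htot hsub
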